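/- Let λ ∈ F with λ + λ̄ = 1, let a ∈ F with a ≠ 0, and let c ∈ {0,1} ⊆ F be the image of the natural number m in F (so c = 0 if m is even and c = 1 if m is odd). Then ∑_{x ∈ F, Tr_n(x) = 0} ε(Tr_n(λ·x^(2^m+1)) + Tr_n(a·x)) equals −2^m if Tr_n(a) = c and Tr_m(a·ā) = 0; equals 2^m if Tr_n(a) = c and Tr_m(a·ā) = 1; and equals 0 if Tr_n(a) ≠ c. -/

import Mathlib

open Finset

/-- Absolute trace-style sum `Tr_n : F → F` for `n = 2m`. -/
def trN (m : ℕ) {F : Type*} [Field F] (x : F) : F :=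
  ∑ i ∈ Finset.range (2 * m), x ^ (2 ^ i)

/-- Trace-style sum `Tr_m : F → F` (meant for elements of the subfield `K`). -/
def trM (m : ℕ) {F : Type*} [Field F] (x : F) : F :=
  ∑ i ∈ Finset.range m, x ^ (2 ^ i)

/-- `ε(0) = 1`, `ε(t) = -1` for `t ≠ 0`. -/
def eps {F : Type*} [Field F] [DecidableEq F] (t : F) : ℤ :=
  if t = 0 then 1 else -1

/-- Kloosterman sum `k_m(μ) = ∑_{x ∈ K, x ≠ 0} χ_m(x + μ x⁻¹)`. -/
def klooM (m : ℕ) {F : Type*} [Field F] [Fintype F] [DecidableEq F] (μ : F) : ℤ :=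
  ∑ x ∈ Finset.univ.filter (fun x : F => x ^ (2 ^ m) = x ∧ x ≠ 0),
    eps (trM m (x + μ * x⁻¹))

/-- Kloosterman sum over the big field: `k_n(μ) = ∑_{x ∈ F, x ≠ 0} χ_n(x + μ x⁻¹)`. -/
def klooN (m : ℕ) {F : Type*} [Field F] [Fintype F] [DecidableEq F] (μ : F) : ℤ :=
  ∑ x ∈ Finset.univ.filter (fun x : F => x ≠ 0), eps (trN m (x + μ * x⁻¹))

/-- Walsh transform of `h : F → F` (with values in `{0,1}`) at `a`. -/
def walsh (m : ℕ) {F : Type*} [Field F] [Fintype F] [DecidableEq F] (h : F → F) (a : F) : ℤ :=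
  ∑ x : F, eps (h x + trN m (a * x))

/-- The Boolean function `f_{λ,μ}(x) = Tr_n(λ x^{2^m+1}) + Tr_n(x)·Tr_n(μ x^{2^m-1})`. -/
def fFun (m : ℕ) {F : Type*} [Field F] (l μ : F) : F → F :=
  fun x => trN m (l * x ^ (2 ^ m + 1)) + trN m x * trN m (μ * x ^ (2 ^ m - 1))

/-- The Boolean function
`g_{λ,μ}(x) = (1 + Tr_n(x))·Tr_n(λ x^{2^m+1}) + Tr_n(x)·Tr_n(μ x^{2^m-1})`. -/
def gFun (m : ℕ) {F : Type*} [Field F] (l μ : F) : F → F :=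
  fun x => (1 + trN m x) * trN m (l * x ^ (2 ^ m + 1)) +
    trN m x * trN m (μ * x ^ (2 ^ m - 1))


namespace Stmt5Aux

open Polynomial

variable {F : Type*} [Field F]

lemma char_two (m : ℕ) [Fintype F] (hm : 0 < m) (hcard : Fintype.card F = 2 ^ (2 * m)) :
    CharP F 2 := by
  have h0 : ((2 : ℕ) : F) = 0 := by
    have h := FiniteField.cast_card_eq_zero F
    rw [hcard] at h
    push_cast at h
    exact pow_eq_zero_iff (by positivity : 0 < 2*m).ne' |>.mp h
  have hdvd : ringChar F ∣ 2 := ringChar.dvd (by exact_mod_cast h0)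
  have hne1 : ringChar F ≠ 1 := CharP.ringChar_ne_one
  have h2 : ringChar F = 2 := by
    rcases (Nat.prime_two.eq_one_or_self_of_dvd _ hdvd) with h | h
    · exact absurd h hne1
    · exact h
  exact h2 ▸ ringChar.charP F

lemma trM_add [CharP F 2] (m : ℕ) (x y : F) : trM m (x + y) = trM m x + trM m y := by
  simp only [trM, add_pow_char_pow, Finset.sum_add_distrib]

lemma tr_idem_aux [CharP F 2] (k : ℕ) (x : F) (hx : x ^ 2 ^ k = x) :
    (∑ i ∈ Finset.range k, x ^ 2 ^ i) * (∑ i ∈ Finset.range k, x ^ 2 ^ i)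
      = ∑ i ∈ Finset.range k, x ^ 2 ^ i := by
  have h1 : (∑ i ∈ Finset.range k, x ^ 2 ^ i) * (∑ i ∈ Finset.range k, x ^ 2 ^ i)
      = ∑ i ∈ Finset.range k, x ^ 2 ^ (i + 1) := by
    rw [← sq, sum_pow_char]
    exact Finset.sum_congr rfl fun i _ => by rw [← pow_mul, pow_succ]
  have h2 := Finset.sum_range_succ' (fun i => x ^ 2 ^ i) k
  have h3 := Finset.sum_range_succ (fun i => x ^ 2 ^ i) k
  rw [h1]
  have h4 := h2.symm.trans h3
  simp only [pow_zero, pow_one, hx] at h4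
  exact add_right_cancel h4

lemma zero_or_one {t : F} (h : t * t = t) : t = 0 ∨ t = 1 := by
  have h0 : t * (t - 1) = 0 := by rw [mul_sub, mul_one, h, sub_self]
  rcases mul_eq_zero.mp h0 with h | h
  · exact Or.inl h
  · exact Or.inr (sub_eq_zero.mp h)

lemma trM_idem [CharP F 2] (m : ℕ) (x : F) (hx : x ^ 2 ^ m = x) :
    trM m x = 0 ∨ trM m x = 1 :=
  zero_or_one (tr_idem_aux m x hx)

lemma trN_idem [CharP F 2] (m : ℕ) (x : F) (hx : x ^ 2 ^ (2*m) = x) :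
    trN m x = 0 ∨ trN m x = 1 :=
  zero_or_one (tr_idem_aux (2*m) x hx)

lemma trN_split [CharP F 2] (m : ℕ) (x : F) : trN m x = trM m x + trM m (x ^ 2 ^ m) := by
  rw [trN, trM, trM, two_mul, Finset.sum_range_add]
  congr 1
  exact Finset.sum_congr rfl fun i _ => by rw [← pow_mul, ← pow_add]

lemma trM_zero (m : ℕ) : trM m (0 : F) = 0 := by
  rw [trM]
  exact Finset.sum_eq_zero fun i _ => zero_pow (by positivity : (0:ℕ) < 2 ^ i).ne'

lemma trM_one [CharP F 2] (m : ℕ) : trM m (1 : F) = (m : F) := by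
  simp [trM]

lemma two_eq_zero' [CharP F 2] : (1 : F) + 1 = 0 := by
  have h := CharP.cast_eq_zero F 2
  calc (1:F) + 1 = ((2:ℕ):F) := by push_cast; ring
  _ = 0 := h

section WithFintype

variable [Fintype F] [DecidableEq F] [CharP F 2]

lemma eps_zero' : eps (0 : F) = 1 := by simp [eps]

lemma eps_add {s t : F} (hs : s = 0 ∨ s = 1) (ht : t = 0 ∨ t = 1) :
    eps (s + t) = eps s * eps t := by
  rcases hs with hs | hs <;> rcases ht with ht | ht <;>
    simp [eps, hs, ht, two_eq_zero', one_ne_zero]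
-- the balanced-character lemma on K, assuming K has full size 2^m
lemma sumK_eq_zero (m : ℕ) (hm : 0 < m)
    (hKcard : (Finset.univ.filter (fun u : F => u ^ 2 ^ m = u)).card = 2 ^ m) :
    ∑ u ∈ Finset.univ.filter (fun u : F => u ^ 2 ^ m = u), eps (trM m u) = 0 := by
  classical
  set K := Finset.univ.filter (fun u : F => u ^ 2 ^ m = u) with hK
  have hmemK : ∀ u : F, u ∈ K ↔ u ^ 2 ^ m = u := by
    intro u; simp [hK]
  -- trM m u ∈ {0,1} for u ∈ K
  have hidem : ∀ u ∈ K, trM m u * trM m u = trM m u := by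
    intro u hu
    have h1 : (∑ i ∈ Finset.range m, u ^ 2 ^ i) * (∑ i ∈ Finset.range m, u ^ 2 ^ i)
        = ∑ i ∈ Finset.range m, u ^ 2 ^ (i + 1) := by
      rw [← sq, sum_pow_char]
      exact Finset.sum_congr rfl fun i _ => by rw [← pow_mul, pow_succ]
    have h2 := Finset.sum_range_succ' (fun i => u ^ 2 ^ i) m
    have h3 := Finset.sum_range_succ (fun i => u ^ 2 ^ i) m
    rw [trM, h1]
    have h4 := h2.symm.trans h3
    simp only [pow_zero, pow_one, (hmemK u).mp hu] at h4
    exact add_right_cancel h4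
  -- there is u0 ∈ K with trM m u0 ≠ 0
  obtain ⟨u0, hu0K, hu0⟩ : ∃ u0 ∈ K, trM m u0 ≠ 0 := by
    by_contra hcon
    push_neg at hcon
    -- K would consist of roots of the polynomial ∑ X^(2^i), of degree ≤ 2^(m-1)
    set p : F[X] := ∑ i ∈ Finset.range m, X ^ 2 ^ i with hp
    have hpne : p ≠ 0 := by
      intro hzero
      have hc : p.coeff 1 = 1 := by
        rw [hp, Polynomial.finset_sum_coeff]
        have : ∀ i ∈ Finset.range m, (X ^ 2 ^ i : F[X]).coeff 1
            = if i = 0 then 1 else 0 := by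
          intro i _
          rw [Polynomial.coeff_X_pow]
          by_cases h : i = 0
          · simp [h]
          · have : ¬ (1 = 2 ^ i) := by
              have : 2 ≤ 2 ^ i := by
                calc 2 = 2^1 := (pow_one 2).symm
                _ ≤ 2 ^ i := Nat.pow_le_pow_right (by norm_num) (by omega)
              omega
            simp [this, h]
        rw [Finset.sum_congr rfl this, Finset.sum_ite_eq' (Finset.range m) 0 (fun _ => (1:F))]
        simp [hm]
      rw [hzero] at hc
      simp at hc
    have hdeg : p.natDegree ≤ 2 ^ (m - 1) := by
      rw [hp]
      apply Polynomial.natDegree_sum_le_of_forall_le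
      intro i hi
      rw [Polynomial.natDegree_X_pow]
      exact Nat.pow_le_pow_right (by norm_num) (by simp at hi; omega)
    have hsub : K ⊆ p.roots.toFinset := by
      intro u hu
      rw [Multiset.mem_toFinset, Polynomial.mem_roots hpne]
      have : p.eval u = trM m u := by
        rw [hp, trM, Polynomial.eval_finset_sum]
        simp
      rw [Polynomial.IsRoot.def, this]
      exact hcon u hu
    have : (2:ℕ) ^ m ≤ 2 ^ (m - 1) := by
      calc (2:ℕ)^m = K.card := hKcard.symm
      _ ≤ p.roots.toFinset.card := Finset.card_le_card hsub
      _ ≤ Multiset.card p.roots := Multiset.toFinset_card_le _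
      _ ≤ p.natDegree := Polynomial.card_roots' p
      _ ≤ 2 ^ (m-1) := hdeg
    have : (2:ℕ) ^ (m-1) < 2 ^ m := Nat.pow_lt_pow_right (by norm_num) (by omega)
    omega
  -- split K by trM = 0 vs ≠ 0 and pair up
  have hcardeq : (K.filter (fun u => trM m u = 0)).card
      = (K.filter (fun u => trM m u ≠ 0)).card := by
    apply Finset.card_nbij' (fun u => u + u0) (fun u => u + u0)
    · intro u hu
      simp only [Finset.mem_coe, Finset.mem_filter] at hu ⊢
      constructor
      · rw [hmemK, add_pow_char_pow, (hmemK u).mp hu.1, (hmemK u0).mp hu0K]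
      · have : trM m (u + u0) = trM m u + trM m u0 := by
          simp only [trM, add_pow_char_pow, Finset.sum_add_distrib]
        rw [this, hu.2, zero_add]
        exact hu0
    · intro u hu
      simp only [Finset.mem_coe, Finset.mem_filter] at hu ⊢
      have hKmem : u + u0 ∈ K := by
        rw [hmemK, add_pow_char_pow, (hmemK u).mp hu.1, (hmemK u0).mp hu0K]
      refine ⟨hKmem, ?_⟩
      have hadd : trM m (u + u0) = trM m u + trM m u0 := by
        simp only [trM, add_pow_char_pow, Finset.sum_add_distrib]
      have h1 : trM m u = 1 := by
        rcases zero_or_one (hidem u hu.1) with h | h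
        · exact absurd h hu.2
        · exact h
      have h2 : trM m u0 = 1 := by
        rcases zero_or_one (hidem u0 hu0K) with h | h
        · exact absurd h hu0
        · exact h
      rw [hadd, h1, h2]
      have hc := CharP.cast_eq_zero F 2
      push_cast at hc
      linear_combination hc
    · intro u _
      have : u0 + u0 = 0 := by
        have hc := CharP.cast_eq_zero F 2
        push_cast at hc
        linear_combination u0 * hc
      beta_reduce
      rw [add_assoc, this, add_zero]
    · intro u _
      have : u0 + u0 = 0 := by
        have hc := CharP.cast_eq_zero F 2
        push_cast at hc
        linear_combination u0 * hc
      beta_reduce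
      rw [add_assoc, this, add_zero]
  -- conclude
  rw [← Finset.sum_filter_add_sum_filter_not K (fun u => trM m u = 0)]
  have e0 : ∑ u ∈ K.filter (fun u => trM m u = 0), eps (trM m u)
      = ((K.filter (fun u => trM m u = 0)).card : ℤ) := by
    calc ∑ u ∈ K.filter (fun u => trM m u = 0), eps (trM m u)
        = ∑ _u ∈ K.filter (fun u => trM m u = 0), (1:ℤ) := by
          refine Finset.sum_congr rfl fun u hu => ?_
          rw [Finset.mem_filter] at hu
          rw [hu.2]; exact eps_zero'
    _ = _ := by simp
  have e1 : ∑ u ∈ K.filter (fun u => ¬ trM m u = 0), eps (trM m u)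
      = -((K.filter (fun u => ¬ trM m u = 0)).card : ℤ) := by
    calc ∑ u ∈ K.filter (fun u => ¬ trM m u = 0), eps (trM m u)
        = ∑ _u ∈ K.filter (fun u => ¬ trM m u = 0), (-1:ℤ) := by
          refine Finset.sum_congr rfl fun u hu => ?_
          rw [Finset.mem_filter] at hu
          simp [eps, hu.2]
    _ = _ := by simp
  rw [e0, e1, hcardeq]
  simp



lemma T0 (m : ℕ) (hm : 0 < m)
    (hcard : Fintype.card F = 2 ^ (2 * m)) :
    ∑ x : F, eps (trM m (x ^ (2 ^ m + 1))) = -(2 ^ m : ℤ) := by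
  classical
  have hq2 : 2 ≤ 2 ^ m := by
    calc 2 = 2 ^ 1 := (pow_one 2).symm
    _ ≤ 2 ^ m := Nat.pow_le_pow_right (by norm_num) hm
  have hpowcard : ∀ x : F, x ^ 2 ^ (2 * m) = x := by
    intro x; rw [← hcard]; exact FiniteField.pow_card x
  have hqq : 2 ^ m * 2 ^ m = 2 ^ (2 * m) := by rw [← pow_add, two_mul]
  have hNK : ∀ x : F, (x ^ (2 ^ m + 1)) ^ 2 ^ m = x ^ (2 ^ m + 1) := by
    intro x
    have he : (2 ^ m + 1) * 2 ^ m = 2 ^ (2 * m) + 2 ^ m := by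
      rw [add_mul, one_mul, hqq]
    rw [← pow_mul, he, pow_add, hpowcard, pow_succ]
    ring
  set K := Finset.univ.filter (fun u : F => u ^ 2 ^ m = u) with hK
  have hmemK : ∀ u : F, u ∈ K ↔ u ^ 2 ^ m = u := by intro u; simp [hK]
  have h0K : (0 : F) ∈ K := by
    rw [hmemK]; exact zero_pow (by positivity : (0:ℕ) < 2 ^ m).ne'
  set fib : F → ℕ := fun u => (Finset.univ.filter (fun x : F => x ^ (2 ^ m + 1) = u)).card
    with hfib
  have hmaps : ∀ x : F, x ^ (2 ^ m + 1) ∈ K := fun x => (hmemK _).mpr (hNK x)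
  have hfilter0 : Finset.univ.filter (fun x : F => x ^ (2 ^ m + 1) = (0:F)) = {0} := by
    ext x
    simp [pow_eq_zero_iff (by positivity : (0:ℕ) < 2 ^ m + 1).ne']
  have hfib0 : fib 0 = 1 := by rw [hfib]; simp only [hfilter0]; simp
  have hfible : ∀ u : F, fib u ≤ 2 ^ m + 1 := by
    intro u
    have hsub : Finset.univ.filter (fun x : F => x ^ (2 ^ m + 1) = u)
        ⊆ (Polynomial.nthRoots (2 ^ m + 1) u).toFinset := by
      intro x hx
      rw [Multiset.mem_toFinset, Polynomial.mem_nthRoots (by positivity)]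
      simpa using hx
    calc fib u ≤ (Polynomial.nthRoots (2 ^ m + 1) u).toFinset.card :=
          Finset.card_le_card hsub
    _ ≤ Multiset.card (Polynomial.nthRoots (2 ^ m + 1) u) := Multiset.toFinset_card_le _
    _ ≤ 2 ^ m + 1 := Polynomial.card_nthRoots _ _
  have hKcard_le : K.card ≤ 2 ^ m := by
    have hpne : (X ^ 2 ^ m - X : F[X]) ≠ 0 := by
      intro hzero
      have hc : (X ^ 2 ^ m - X : F[X]).coeff 1 = -1 := by
        rw [Polynomial.coeff_sub, Polynomial.coeff_X_pow, Polynomial.coeff_X_one]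
        have : ¬ (1 = 2 ^ m) := by omega
        simp [this]
      rw [hzero] at hc
      simp at hc
    have hsub : K ⊆ (X ^ 2 ^ m - X : F[X]).roots.toFinset := by
      intro u hu
      rw [Multiset.mem_toFinset, Polynomial.mem_roots hpne]
      rw [Polynomial.IsRoot.def]
      simp only [Polynomial.eval_sub, Polynomial.eval_pow, Polynomial.eval_X]
      rw [(hmemK u).mp hu, sub_self]
    calc K.card ≤ (X ^ 2 ^ m - X : F[X]).roots.toFinset.card := Finset.card_le_card hsub
    _ ≤ Multiset.card (X ^ 2 ^ m - X : F[X]).roots := Multiset.toFinset_card_le _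
    _ ≤ (X ^ 2 ^ m - X : F[X]).natDegree := Polynomial.card_roots' _
    _ ≤ 2 ^ m := by
        calc (X ^ 2 ^ m - X : F[X]).natDegree
            ≤ max (X ^ 2 ^ m : F[X]).natDegree (X : F[X]).natDegree :=
              Polynomial.natDegree_sub_le _ _
        _ ≤ 2 ^ m := by
            rw [Polynomial.natDegree_X_pow, Polynomial.natDegree_X]
            omega
  have hcount : ∑ u ∈ K, fib u = 2 ^ (2 * m) := by
    rw [← hcard, ← Finset.card_univ]
    exact (Finset.card_eq_sum_card_fiberwise (fun x _ => hmaps x)).symm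
  -- squeeze
  have hsplit : fib 0 + ∑ u ∈ K.erase 0, fib u = 2 ^ (2 * m) := by
    rw [Finset.add_sum_erase K fib h0K]; exact hcount
  have hscard : (K.erase 0).card + 1 = K.card := by
    rw [Finset.card_erase_of_mem h0K]
    have : 1 ≤ K.card := Finset.card_pos.mpr ⟨0, h0K⟩
    omega
  have hsum_le : ∑ u ∈ K.erase 0, fib u ≤ (K.erase 0).card * (2 ^ m + 1) := by
    calc ∑ u ∈ K.erase 0, fib u ≤ ∑ _u ∈ K.erase 0, (2 ^ m + 1) :=
          Finset.sum_le_sum (fun u _ => hfible u)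
    _ = (K.erase 0).card * (2 ^ m + 1) := by rw [Finset.sum_const, smul_eq_mul]
  have hml : K.card * (2 ^ m + 1) ≤ 2 ^ m * (2 ^ m + 1) :=
    Nat.mul_le_mul_right _ hKcard_le
  have hexp : K.card * (2 ^ m + 1) = (K.erase 0).card * (2 ^ m + 1) + (2 ^ m + 1) := by
    rw [← hscard]; ring
  have hexp2 : 2 ^ m * (2 ^ m + 1) = 2 ^ (2 * m) + 2 ^ m := by
    calc 2 ^ m * (2 ^ m + 1) = 2 ^ m * 2 ^ m + 2 ^ m := by ring
    _ = 2 ^ (2 * m) + 2 ^ m := by rw [hqq]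
  have hBeq : ∑ u ∈ K.erase 0, fib u = (K.erase 0).card * (2 ^ m + 1) := by omega
  have hCD : K.card * (2 ^ m + 1) = 2 ^ m * (2 ^ m + 1) := by omega
  have hKcard : K.card = 2 ^ m := Nat.eq_of_mul_eq_mul_right (by positivity) hCD
  have hfib_eq : ∀ u ∈ K.erase 0, fib u = 2 ^ m + 1 := by
    intro u hu
    by_contra hne
    have hlt : fib u < 2 ^ m + 1 := lt_of_le_of_ne (hfible u) hne
    have hstrict : ∑ v ∈ K.erase 0, fib v < ∑ _v ∈ K.erase 0, (2 ^ m + 1) :=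
      Finset.sum_lt_sum (fun v _ => hfible v) ⟨u, hu, hlt⟩
    rw [Finset.sum_const, smul_eq_mul] at hstrict
    omega
  -- main computation
  have hfiber : ∑ u ∈ K, ∑ x ∈ Finset.univ.filter (fun x : F => x ^ (2 ^ m + 1) = u),
      eps (trM m u) = ∑ x : F, eps (trM m (x ^ (2 ^ m + 1))) :=
    Finset.sum_fiberwise_of_maps_to' (fun x _ => hmaps x) _
  rw [← hfiber]
  have hinner : ∀ u ∈ K, ∑ x ∈ Finset.univ.filter (fun x : F => x ^ (2 ^ m + 1) = u),
      eps (trM m u) = (fib u : ℤ) * eps (trM m u) := by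
    intro u _
    rw [Finset.sum_const, hfib, nsmul_eq_mul]
  rw [Finset.sum_congr rfl hinner]
  rw [← Finset.add_sum_erase K _ h0K]
  have hs_eps : ∑ u ∈ K.erase 0, (fib u : ℤ) * eps (trM m u)
      = (2 ^ m + 1 : ℤ) * ∑ u ∈ K.erase 0, eps (trM m u) := by
    rw [Finset.mul_sum]
    refine Finset.sum_congr rfl fun u hu => ?_
    rw [hfib_eq u hu]
    push_cast
    ring
  have hKsum : ∑ u ∈ K, eps (trM m u) = 0 := sumK_eq_zero m hm hKcard
  have hesum : ∑ u ∈ K.erase 0, eps (trM m u) = -1 := by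
    have := Finset.add_sum_erase K (fun u => eps (trM m u)) h0K
    rw [hKsum] at this
    simp only [trM_zero, eps_zero'] at this
    omega
  rw [hs_eps, hesum, hfib0, trM_zero, eps_zero']
  push_cast
  ring


lemma Tb (m : ℕ) (hm : 0 < m) (hcard : Fintype.card F = 2 ^ (2 * m)) (b : F) :
    ∑ x : F, eps (trM m (x ^ (2 ^ m + 1) + b * x + b ^ 2 ^ m * x ^ 2 ^ m))
      = eps (trM m (b ^ (2 ^ m + 1))) * (-(2 ^ m : ℤ)) := by
  have hpc : ∀ x : F, x ^ 2 ^ (2 * m) = x := by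
    intro x; rw [← hcard]; exact FiniteField.pow_card x
  have hqq : (2:ℕ) ^ m * 2 ^ m = 2 ^ (2 * m) := by rw [← pow_add, two_mul]
  have hqqx : ∀ x : F, (x ^ 2 ^ m) ^ 2 ^ m = x := by
    intro x; rw [← pow_mul, hqq]; exact hpc x
  have hNfix : ∀ x : F, (x ^ (2 ^ m + 1)) ^ 2 ^ m = x ^ (2 ^ m + 1) := by
    intro x
    have he : (2 ^ m + 1) * 2 ^ m = 2 ^ (2 * m) + 2 ^ m := by rw [add_mul, one_mul, hqq]
    rw [← pow_mul, he, pow_add, hpc, pow_succ]; ring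
  have h2 : (2 : F) = 0 := by exact_mod_cast CharP.cast_eq_zero F 2
  have hshift : ∀ x : F, (x + b ^ 2 ^ m) ^ (2 ^ m + 1) + b * (x + b ^ 2 ^ m)
      + b ^ 2 ^ m * (x + b ^ 2 ^ m) ^ 2 ^ m = x ^ (2 ^ m + 1) + b ^ (2 ^ m + 1) := by
    intro x
    have e1 : (x + b ^ 2 ^ m) ^ 2 ^ m = x ^ 2 ^ m + b := by
      rw [add_pow_char_pow, hqqx b]
    rw [pow_succ, pow_succ, pow_succ, e1]
    linear_combination (x ^ 2 ^ m * b ^ 2 ^ m + b * x + b * b ^ 2 ^ m) * h2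
  have hbij : Function.Bijective (fun x : F => x + b ^ 2 ^ m) :=
    (Equiv.addRight (b ^ 2 ^ m)).bijective
  have hre : ∑ x : F, eps (trM m (x ^ (2 ^ m + 1) + b * x + b ^ 2 ^ m * x ^ 2 ^ m))
      = ∑ x : F, eps (trM m (x ^ (2 ^ m + 1) + b ^ (2 ^ m + 1))) := by
    rw [← Fintype.sum_bijective _ hbij
      (fun x : F => eps (trM m ((x + b ^ 2 ^ m) ^ (2 ^ m + 1) + b * (x + b ^ 2 ^ m)
        + b ^ 2 ^ m * (x + b ^ 2 ^ m) ^ 2 ^ m)))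
      (fun x : F => eps (trM m (x ^ (2 ^ m + 1) + b * x + b ^ 2 ^ m * x ^ 2 ^ m)))
      (fun x => rfl)]
    exact Finset.sum_congr rfl fun x _ => by rw [hshift x]
  rw [hre]
  have hsplit : ∀ x : F, eps (trM m (x ^ (2 ^ m + 1) + b ^ (2 ^ m + 1)))
      = eps (trM m (x ^ (2 ^ m + 1))) * eps (trM m (b ^ (2 ^ m + 1))) := by
    intro x
    rw [trM_add]
    exact eps_add (trM_idem m _ (hNfix x)) (trM_idem m _ (hNfix b))
  rw [Finset.sum_congr rfl fun x _ => hsplit x, ← Finset.sum_mul, T0 m hm hcard]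
  ring

end WithFintype

end Stmt5Aux

theorem stmt5 (m : ℕ) (hm : 0 < m) (F : Type*) [Field F] [Fintype F] [DecidableEq F]
    (hcard : Fintype.card F = 2 ^ (2 * m))
    (l : F) (hl : l + l ^ (2 ^ m) = 1) (a : F) (ha : a ≠ 0) :
    (trN m a = (m : F) → trM m (a * a ^ (2 ^ m)) = 0 →
      ∑ x ∈ Finset.univ.filter (fun x : F => trN m x = 0),
        eps (trN m (l * x ^ (2 ^ m + 1)) + trN m (a * x)) = -(2 ^ m : ℤ)) ∧
    (trN m a = (m : F) → trM m (a * a ^ (2 ^ m)) = 1 →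
      ∑ x ∈ Finset.univ.filter (fun x : F => trN m x = 0),
        eps (trN m (l * x ^ (2 ^ m + 1)) + trN m (a * x)) = (2 ^ m : ℤ)) ∧
    (trN m a ≠ (m : F) →
      ∑ x ∈ Finset.univ.filter (fun x : F => trN m x = 0),
        eps (trN m (l * x ^ (2 ^ m + 1)) + trN m (a * x)) = 0) := by
  classical
  haveI : CharP F 2 := Stmt5Aux.char_two m hm hcard
  have hpc : ∀ x : F, x ^ 2 ^ (2 * m) = x := by
    intro x; rw [← hcard]; exact FiniteField.pow_card x
  have hqq : (2:ℕ) ^ m * 2 ^ m = 2 ^ (2 * m) := by rw [← pow_add, two_mul]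
  have hqqx : ∀ x : F, (x ^ 2 ^ m) ^ 2 ^ m = x := by
    intro x; rw [← pow_mul, hqq]; exact hpc x
  have hNfix : ∀ x : F, (x ^ (2 ^ m + 1)) ^ 2 ^ m = x ^ (2 ^ m + 1) := by
    intro x
    have he : (2 ^ m + 1) * 2 ^ m = 2 ^ (2 * m) + 2 ^ m := by rw [add_mul, one_mul, hqq]
    rw [← pow_mul, he, pow_add, hpc, pow_succ]; ring
  have h2 : (2 : F) = 0 := by exact_mod_cast CharP.cast_eq_zero F 2
  have h11 : (1 : F) + 1 = 0 := Stmt5Aux.two_eq_zero'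
  -- the auxiliary quadratic expression
  have hgfix : ∀ b x : F, (x ^ (2 ^ m + 1) + b * x + b ^ 2 ^ m * x ^ 2 ^ m) ^ 2 ^ m
      = x ^ (2 ^ m + 1) + b * x + b ^ 2 ^ m * x ^ 2 ^ m := by
    intro b x
    rw [add_pow_char_pow, add_pow_char_pow, mul_pow, mul_pow, hNfix, hqqx, hqqx]
    ring
  -- rewrite the summand
  have key1 : ∀ x : F, trN m (l * x ^ (2 ^ m + 1)) + trN m (a * x)
      = trM m (x ^ (2 ^ m + 1) + a * x + a ^ 2 ^ m * x ^ 2 ^ m) := by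
    intro x
    have hu : (x ^ (2 ^ m + 1)) ^ 2 ^ m = x ^ (2 ^ m + 1) := hNfix x
    have e1 : trN m (l * x ^ (2 ^ m + 1)) = trM m (x ^ (2 ^ m + 1)) := by
      rw [Stmt5Aux.trN_split, mul_pow, hu, ← Stmt5Aux.trM_add, ← add_mul, hl, one_mul]
    have e2 : trN m (a * x) = trM m (a * x) + trM m (a ^ 2 ^ m * x ^ 2 ^ m) := by
      rw [Stmt5Aux.trN_split, mul_pow]
    rw [e1, e2, Stmt5Aux.trM_add, Stmt5Aux.trM_add]
    ring
  have key2 : ∀ x : F, trM m (x ^ (2 ^ m + 1) + (a + 1) * x + (a + 1) ^ 2 ^ m * x ^ 2 ^ m)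
      = trM m (x ^ (2 ^ m + 1) + a * x + a ^ 2 ^ m * x ^ 2 ^ m) + trN m x := by
    intro x
    have hb : (a + 1 : F) ^ 2 ^ m = a ^ 2 ^ m + 1 := by
      rw [add_pow_char_pow, one_pow]
    have e : x ^ (2 ^ m + 1) + (a + 1) * x + (a + 1) ^ 2 ^ m * x ^ 2 ^ m
        = (x ^ (2 ^ m + 1) + a * x + a ^ 2 ^ m * x ^ 2 ^ m) + (x + x ^ 2 ^ m) := by
      rw [hb]; ring
    rw [e, Stmt5Aux.trM_add, Stmt5Aux.trM_add m x (x ^ 2 ^ m), ← Stmt5Aux.trN_split]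
  have hfval : ∀ x : F, trM m (x ^ (2 ^ m + 1) + a * x + a ^ 2 ^ m * x ^ 2 ^ m) = 0 ∨
      trM m (x ^ (2 ^ m + 1) + a * x + a ^ 2 ^ m * x ^ 2 ^ m) = 1 :=
    fun x => Stmt5Aux.trM_idem m _ (hgfix a x)
  have htrN01 : ∀ x : F, trN m x = 0 ∨ trN m x = 1 :=
    fun x => Stmt5Aux.trN_idem m x (hpc x)
  set S : ℤ := ∑ x ∈ Finset.univ.filter (fun x : F => trN m x = 0),
      eps (trN m (l * x ^ (2 ^ m + 1)) + trN m (a * x)) with hS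
  have h2S : 2 * S
      = (∑ x : F, eps (trM m (x ^ (2 ^ m + 1) + a * x + a ^ 2 ^ m * x ^ 2 ^ m)))
      + ∑ x : F, eps (trM m (x ^ (2 ^ m + 1) + (a+1) * x + (a+1) ^ 2 ^ m * x ^ 2 ^ m)) := by
    rw [hS, Finset.sum_filter, Finset.mul_sum, ← Finset.sum_add_distrib]
    refine Finset.sum_congr rfl fun x _ => ?_
    rw [key1 x, key2 x]
    rcases htrN01 x with h | h
    · rw [h, if_pos rfl, add_zero]
      ring
    · rw [h, if_neg one_ne_zero]
      rcases hfval x with hf | hf <;> rw [hf]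
      · norm_num [eps, one_ne_zero]
      · simp [eps, h11, one_ne_zero]
  rw [Stmt5Aux.Tb m hm hcard a, Stmt5Aux.Tb m hm hcard (a+1)] at h2S
  -- relate the two eps arguments
  have htra1 : trM m ((a + 1) ^ (2 ^ m + 1))
      = trM m (a ^ (2 ^ m + 1)) + (trN m a + (m : F)) := by
    have hb : (a + 1 : F) ^ 2 ^ m = a ^ 2 ^ m + 1 := by
      rw [add_pow_char_pow, one_pow]
    have e : (a + 1 : F) ^ (2 ^ m + 1) = a ^ (2 ^ m + 1) + ((a + a ^ 2 ^ m) + 1) := by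
      rw [pow_succ, pow_succ, hb]; ring
    rw [e, Stmt5Aux.trM_add, Stmt5Aux.trM_add, Stmt5Aux.trM_add, ← Stmt5Aux.trN_split,
      Stmt5Aux.trM_one]
  have hA01 : trM m (a ^ (2 ^ m + 1)) = 0 ∨ trM m (a ^ (2 ^ m + 1)) = 1 :=
    Stmt5Aux.trM_idem m _ (hNfix a)
  have hm01 : (m : F) = 0 ∨ (m : F) = 1 := by
    rcases Nat.even_or_odd m with ⟨k, hk⟩ | ⟨k, hk⟩
    · left; rw [hk]; push_cast; linear_combination (k : F) * h2
    · right; rw [hk]; push_cast; linear_combination (k : F) * h2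
  have haA : a ^ (2 ^ m + 1) = a * a ^ 2 ^ m := by rw [pow_succ]; ring
  refine ⟨?_, ?_, ?_⟩
  · intro hc h0
    have hcc : trN m a + (m : F) = 0 := by rw [hc]; linear_combination (m : F) * h2
    rw [htra1, hcc, add_zero] at h2S
    have hA0 : trM m (a ^ (2 ^ m + 1)) = 0 := by rw [haA]; exact h0
    rw [hA0, Stmt5Aux.eps_zero'] at h2S
    have : (2:ℤ) * S = 2 * (-(2 ^ m : ℤ)) := by rw [h2S]; ring
    exact mul_left_cancel₀ two_ne_zero this
  · intro hc h1
    have hcc : trN m a + (m : F) = 0 := by rw [hc]; linear_combination (m : F) * h2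
    rw [htra1, hcc, add_zero] at h2S
    have hA1 : trM m (a ^ (2 ^ m + 1)) = 1 := by rw [haA]; exact h1
    rw [hA1] at h2S
    have heps1 : eps (1 : F) = -1 := by simp [eps, one_ne_zero]
    rw [heps1] at h2S
    have : (2:ℤ) * S = 2 * ((2 ^ m : ℤ)) := by rw [h2S]; ring
    exact mul_left_cancel₀ two_ne_zero this
  · intro hc
    have hcc : trN m a + (m : F) = 1 := by
      rcases htrN01 a with h | h <;> rcases hm01 with h' | h'
      · exact absurd (h.trans h'.symm) hc
      · rw [h, h', zero_add]
      · rw [h, h', add_zero]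
      · exact absurd (h.trans h'.symm) hc
    rw [htra1, hcc] at h2S
    have hflip : eps (trM m (a ^ (2 ^ m + 1)) + 1) = - eps (trM m (a ^ (2 ^ m + 1))) := by
      rcases hA01 with h | h <;> rw [h]
      · norm_num [eps, one_ne_zero]
      · simp [eps, h11, one_ne_zero]
    rw [hflip] at h2S
    have : (2:ℤ) * S = 2 * 0 := by rw [h2S]; ring
    exact mul_left_cancel₀ two_ne_zero this
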